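/- arXiv:2508.02676 — 2 statements merged into one kernel-verified Lean document; each statement's English description precedes it below -/
import Mathlib

section
/- Let ρ : ℝ × ℝ^d → ℝ be twice continuously differentiable (jointly in (t,x)) and everywhere positive, and suppose ρ satisfies the heat equation ∂_t ρ(t,x) = Δ_x ρ(t,x) for all (t,x). Set s(t,x) := log ρ(t,x), and let X : ℝ → ℝ^d be differentiable with X'(t) = −∇_x s(t, X(t)) for all t. Then the function t ↦ s(t, X(t)) is differentiable with d/dt [s(t, X(t))] = Δ_x s(t,·)(X(t)) for all t. -/
/-- The divergence of a vector field on Euclidean space: the trace of its Jacobian. -/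
noncomputable def vecDiv {d : ℕ} (F : EuclideanSpace ℝ (Fin d) → EuclideanSpace ℝ (Fin d))
    (x : EuclideanSpace ℝ (Fin d)) : ℝ :=
  LinearMap.trace ℝ (EuclideanSpace ℝ (Fin d))
    (fderiv ℝ F x : EuclideanSpace ℝ (Fin d) →ₗ[ℝ] EuclideanSpace ℝ (Fin d))

/-- The Laplacian of a scalar function: the divergence of its gradient. -/
noncomputable def lap {d : ℕ} (f : EuclideanSpace ℝ (Fin d) → ℝ)
    (x : EuclideanSpace ℝ (Fin d)) : ℝ :=
  vecDiv (fun y => gradient f y) x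

section Aux

variable {d : ℕ}

local notation "E" => EuclideanSpace ℝ (Fin d)

/-- Trace of a rank-one continuous linear map. -/
lemma trace_smulRight_aux (L : E →L[ℝ] ℝ) (v : E) :
    LinearMap.trace ℝ E ((L.smulRight v : E →L[ℝ] E) : E →ₗ[ℝ] E) = L v := by
  have h1 : ((L.smulRight v : E →L[ℝ] E) : E →ₗ[ℝ] E)
      = (LinearMap.toSpanSingleton ℝ E v).comp (L : E →ₗ[ℝ] ℝ) := by
    ext x
    simp [LinearMap.toSpanSingleton_apply]
  rw [h1, LinearMap.trace_comp_comm']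
  have h2 : (L : E →ₗ[ℝ] ℝ).comp (LinearMap.toSpanSingleton ℝ E v)
      = L v • LinearMap.id := by
    apply LinearMap.ext_ring
    simp [LinearMap.toSpanSingleton_apply]
  rw [h2, map_smul, LinearMap.trace_id]
  simp

lemma inner_gradient (f : E → ℝ) (x v : E) (_hf : DifferentiableAt ℝ f x) :
    fderiv ℝ f x v = @inner ℝ _ _ (gradient f x) v := by
  rw [gradient, InnerProductSpace.toDual_symm_apply]

end Aux

/-- For a positive solution of the heat equation, along trajectories moving with velocity
`−∇s` where `s = log ρ`, the material derivative of `s` equals `Δs`. -/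
theorem stmt7 {d : ℕ} (ρ : ℝ → EuclideanSpace ℝ (Fin d) → ℝ)
    (hρreg : ContDiff ℝ 2 fun q : ℝ × EuclideanSpace ℝ (Fin d) => ρ q.1 q.2)
    (hρpos : ∀ t x, 0 < ρ t x)
    (hheat : ∀ t x, deriv (fun u => ρ u x) t = lap (ρ t) x)
    (s : ℝ → EuclideanSpace ℝ (Fin d) → ℝ)
    (hs : ∀ t x, s t x = Real.log (ρ t x))
    (X : ℝ → EuclideanSpace ℝ (Fin d))
    (hX : ∀ t, HasDerivAt X (- gradient (s t) (X t)) t) :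
    ∀ t, HasDerivAt (fun u => s u (X u)) (lap (s t) (X t)) t := by
  classical
  set F : ℝ × EuclideanSpace ℝ (Fin d) → ℝ := fun q => ρ q.1 q.2 with hF
  have hFdiff : Differentiable ℝ F := hρreg.differentiable two_ne_zero
  intro t
  set x := X t with hx
  set f : EuclideanSpace ℝ (Fin d) → ℝ := ρ t with hfdef
  have hfpos : ∀ y, 0 < f y := hρpos t
  -- `f` is C²
  have hf2 : ContDiff ℝ 2 f := by
    have : f = F ∘ (fun y : EuclideanSpace ℝ (Fin d) => ((t : ℝ), y)) := rfl
    rw [this]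
    exact hρreg.comp (contDiff_const.prodMk contDiff_id)
  have hfd : Differentiable ℝ f := hf2.differentiable two_ne_zero
  -- gradient of f is differentiable
  have hfc1 : ContDiff ℝ 1 (fderiv ℝ f) := hf2.fderiv_right (by norm_num)
  have hgdiff : Differentiable ℝ (gradient f) := by
    have : gradient f = fun y =>
        (InnerProductSpace.toDual ℝ (EuclideanSpace ℝ (Fin d))).symm.toContinuousLinearEquiv (fderiv ℝ f y) := rfl
    rw [this]
    exact (InnerProductSpace.toDual ℝ (EuclideanSpace ℝ (Fin d))).symm.toContinuousLinearEquiv.differentiable.comp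
      (hfc1.differentiable one_ne_zero)
  -- gradient of s t
  have hst : s t = fun y => Real.log (f y) := funext fun y => hs t y
  have hsderiv : ∀ y, HasFDerivAt (s t) ((f y)⁻¹ • fderiv ℝ f y) y := by
    intro y
    rw [hst]
    exact ((hfd y).hasFDerivAt).log (hfpos y).ne'
  have hgradst : ∀ y, gradient (s t) y = (f y)⁻¹ • gradient f y := by
    intro y
    rw [gradient, (hsderiv y).fderiv, map_smulₛₗ]
    simp [gradient]
  -- derivative of gradient (s t)
  set g : EuclideanSpace ℝ (Fin d) := gradient f x with hg
  set Dg := fderiv ℝ (gradient f) x with hDg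
  set Df := fderiv ℝ f x with hDf
  have hφ : HasFDerivAt (fun y => (f y)⁻¹) (-((f x)^2)⁻¹ • Df) x :=
    (hasDerivAt_inv (hfpos x).ne').comp_hasFDerivAt x (hfd x).hasFDerivAt
  have hsmul : HasFDerivAt (fun y => (f y)⁻¹ • gradient f y)
      ((f x)⁻¹ • Dg + (-((f x)^2)⁻¹ • Df).smulRight g) x :=
    hφ.smul (hgdiff x).hasFDerivAt
  have hgradsteq : (fun y => (f y)⁻¹ • gradient f y) = gradient (s t) :=
    funext fun y => (hgradst y).symm
  rw [hgradsteq] at hsmul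
  -- compute lap (s t) x
  have hDfg : Df g = @inner ℝ _ _ g g := inner_gradient f x g (hfd x)
  have hlapf : LinearMap.trace ℝ (EuclideanSpace ℝ (Fin d)) (Dg : EuclideanSpace ℝ (Fin d) →ₗ[ℝ] EuclideanSpace ℝ (Fin d)) = lap f x := rfl
  have hlaps : lap (s t) x
      = (f x)⁻¹ * lap f x - ((f x)^2)⁻¹ * @inner ℝ _ _ g g := by
    show LinearMap.trace ℝ (EuclideanSpace ℝ (Fin d)) (fderiv ℝ (fun y => gradient (s t) y) x : EuclideanSpace ℝ (Fin d) →ₗ[ℝ] EuclideanSpace ℝ (Fin d)) = _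
    have : (fun y => gradient (s t) y) = gradient (s t) := rfl
    rw [this, hsmul.fderiv]
    push_cast
    rw [map_add, map_smul, hlapf, trace_smulRight_aux]
    simp only [ContinuousLinearMap.coe_smul', Pi.smul_apply, smul_eq_mul]
    rw [hDfg]
    ring
  -- time derivative
  set DF := fderiv ℝ F (t, x) with hDF
  have hFat : HasFDerivAt F DF (t, x) := (hFdiff (t, x)).hasFDerivAt
  -- partial derivative in time
  have hpt : HasDerivAt (fun u => ρ u x) (DF (1, 0)) t := by
    have hcurve : HasDerivAt (fun u : ℝ => ((u : ℝ), x)) (1, 0) t :=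
      (hasDerivAt_id t).prodMk (hasDerivAt_const t x)
    exact hFat.comp_hasDerivAt t hcurve
  have hDF10 : DF (1, 0) = lap f x := by
    rw [← hpt.deriv, hheat t x]
  -- partial derivative in space
  have hpx : fderiv ℝ f x = DF.comp (ContinuousLinearMap.inr ℝ ℝ (EuclideanSpace ℝ (Fin d))) := by
    have : HasFDerivAt f (DF.comp (ContinuousLinearMap.inr ℝ ℝ (EuclideanSpace ℝ (Fin d)))) x :=
      hFat.comp x (hasFDerivAt_prodMk_right t x)
    exact this.fderiv
  have hDF0v : ∀ v : EuclideanSpace ℝ (Fin d), DF (0, v) = Df v := by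
    intro v
    rw [hDf, hpx]
    rfl
  -- the full chain rule
  have hcurve : HasDerivAt (fun u => ((u : ℝ), X u)) (1, - gradient (s t) x) t :=
    (hasDerivAt_id t).prodMk (hX t)
  have hGat : HasFDerivAt (fun q : ℝ × EuclideanSpace ℝ (Fin d) => Real.log (F q)) ((F (t, x))⁻¹ • DF) (t, x) :=
    hFat.log (hρpos t x).ne'
  have hcomp : HasDerivAt (fun u => Real.log (F (u, X u)))
      (((F (t, x))⁻¹ • DF) (1, - gradient (s t) x)) t :=
    by have := hGat.comp_hasDerivAt t hcurve; exact this
  have hfun : (fun u => Real.log (F (u, X u))) = fun u => s u (X u) :=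
    funext fun u => (hs u (X u)).symm
  rw [hfun] at hcomp
  -- identify the derivative value
  have hval : ((F (t, x))⁻¹ • DF) (1, - gradient (s t) x) = lap (s t) x := by
    have hsplit : ((1 : ℝ), - gradient (s t) x) = ((1 : ℝ), (0 : EuclideanSpace ℝ (Fin d))) + ((0 : ℝ), - gradient (s t) x) := by
      simp
    rw [ContinuousLinearMap.smul_apply, hsplit, map_add, hDF10, hDF0v, hgradst]
    have hFtx : F (t, x) = f x := rfl
    rw [hFtx, hlaps]
    have h1 : Df (-((f x)⁻¹ • g)) = -((f x)⁻¹ * @inner ℝ _ _ g g) := by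
      rw [map_neg, map_smul]
      simp [hDfg]
    rw [h1]
    have hne : f x ≠ 0 := (hfpos x).ne'
    field_simp
    linear_combination (f x * lap f x - @inner ℝ _ _ g g) * (f x * (f x)⁻¹ + 1) * mul_inv_cancel₀ hne
  rw [← hval]
  exact hcomp
end

section
/- Let E be a real normed vector space, f : ℝ → E, t ∈ ℝ, τ > 0, and M ≥ 0. Suppose f is four times differentiable on the closed interval [t − 3τ, t] with ‖f''''(s)‖ ≤ M for all s ∈ [t − 3τ, t]. Then ‖ ((11/6) f(t) − 3 f(t − τ) + (3/2) f(t − 2τ) − (1/3) f(t − 3τ))/τ − f'(t) ‖ ≤ (9/4) M τ³; in particular the BDF3 approximation of f'(t) has truncation error O(τ³). -/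
open Set

lemma taylor3_right {E : Type*} [NormedAddCommGroup E] [NormedSpace ℝ E]
    (f f' f'' f''' f'''' : ℝ → E) (a t M : ℝ)
    (hf : ∀ s ∈ Set.Icc a t, HasDerivWithinAt f (f' s) (Set.Icc a t) s)
    (hf' : ∀ s ∈ Set.Icc a t, HasDerivWithinAt f' (f'' s) (Set.Icc a t) s)
    (hf'' : ∀ s ∈ Set.Icc a t, HasDerivWithinAt f'' (f''' s) (Set.Icc a t) s)
    (hf''' : ∀ s ∈ Set.Icc a t, HasDerivWithinAt f''' (f'''' s) (Set.Icc a t) s)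
    (hbound : ∀ s ∈ Set.Icc a t, ‖f'''' s‖ ≤ M)
    (x : ℝ) (hx : x ∈ Set.Icc a t) :
    ‖f x - f t - (x - t) • f' t - ((x - t) ^ 2 / 2) • f'' t - ((x - t) ^ 3 / 6) • f''' t‖
      ≤ M * (t - x) ^ 4 / 24 := by
  set φ : ℝ → E := fun s =>
    f x - f s - (x - s) • f' s - ((x - s) ^ 2 / 2) • f'' s - ((x - s) ^ 3 / 6) • f''' s with hφ
  set φd : ℝ → E := fun s => (-((x - s) ^ 3 / 6)) • f'''' s with hφd
  have hderiv : ∀ s ∈ Set.Icc a t, HasDerivWithinAt φ (φd s) (Set.Icc a t) s := by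
    intro s hs
    have hc1 : HasDerivWithinAt (fun s => x - s) (-1 : ℝ) (Set.Icc a t) s :=
      ((hasDerivAt_id s).const_sub x).hasDerivWithinAt
    have hc2 : HasDerivWithinAt (fun s => (x - s) ^ 2 / 2) (-(x - s)) (Set.Icc a t) s := by
      have := (hc1.fun_pow 2).div_const 2
      exact this.congr_deriv (by norm_num; ring)
    have hc3 : HasDerivWithinAt (fun s => (x - s) ^ 3 / 6) (-((x - s) ^ 2 / 2)) (Set.Icc a t) s := by
      have := (hc1.fun_pow 3).div_const 6
      exact this.congr_deriv (by norm_num; ring)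
    have h1 := hf s hs
    have h2 := hc1.fun_smul (hf' s hs)
    have h3 := hc2.fun_smul (hf'' s hs)
    have h4 := hc3.fun_smul (hf''' s hs)
    have := ((((hasDerivWithinAt_const s (Set.Icc a t) (f x)).fun_sub h1).fun_sub h2).fun_sub h3).fun_sub h4
    convert this using 1
    simp only [hφd]
    module
  have hcont : ContinuousOn φ (Set.Icc a t) := fun s hs =>
    (hderiv s hs).continuousWithinAt
  -- apply the fencing lemma on [x, t]
  have hxt : x ≤ t := hx.2
  have key : ∀ ⦃y⦄, y ∈ Set.Icc x t → ‖φ y‖ ≤ M * (y - x) ^ 4 / 24 := by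
    have hsub : Set.Icc x t ⊆ Set.Icc a t := Set.Icc_subset_Icc hx.1 le_rfl
    refine image_norm_le_of_norm_deriv_right_le_deriv_boundary (f' := φd)
      (B' := fun s => M * (s - x) ^ 3 / 6) (hcont.mono hsub) ?_ ?_ ?_ ?_
    · intro s hs
      have hmem : Set.Icc a t ∈ nhdsWithin s (Set.Ici s) := by
        refine Filter.mem_of_superset (Filter.inter_mem self_mem_nhdsWithin
          (mem_nhdsWithin_of_mem_nhds (Iio_mem_nhds hs.2))) ?_
        rintro y ⟨hy1, hy2⟩
        exact ⟨hx.1.trans (hs.1.trans hy1), le_of_lt hy2⟩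
      exact (hderiv s (hsub (Set.mem_Icc.mpr ⟨hs.1, le_of_lt hs.2⟩))).mono_of_mem_nhdsWithin hmem
    · simp [hφ]
    · intro s
      have h1 : HasDerivAt (fun s => s - x) (1 : ℝ) s := (hasDerivAt_id s).sub_const x
      have := ((h1.fun_pow 4).const_mul M).div_const 24
      exact this.congr_deriv (by norm_num; ring)
    · intro s hs
      have hsx : x ≤ s := hs.1
      have hsmem : s ∈ Set.Icc a t := hsub ⟨hs.1, le_of_lt hs.2⟩
      have : ‖φd s‖ = (s - x) ^ 3 / 6 * ‖f'''' s‖ := by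
        rw [hφd, norm_smul, Real.norm_eq_abs]
        congr 1
        rw [abs_of_nonneg (by
          have h7 : ((x - s) : ℝ) ^ 3 ≤ 0 := Odd.pow_nonpos (by decide) (sub_nonpos.mpr hsx)
          linarith : (0:ℝ) ≤ -((x - s) ^ 3 / 6))]
        ring
      rw [this]
      have hb := hbound s hsmem
      have h6 : (0:ℝ) ≤ (s - x) ^ 3 / 6 := div_nonneg (pow_nonneg (sub_nonneg.mpr hsx) 3) (by norm_num)
      calc (s - x) ^ 3 / 6 * ‖f'''' s‖ ≤ (s - x) ^ 3 / 6 * M := by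
            exact mul_le_mul_of_nonneg_left hb h6
        _ = M * (s - x) ^ 3 / 6 := by ring
  have := key (Set.right_mem_Icc.mpr hxt)
  simpa [hφ, norm_sub_rev] using this

/-- BDF3 truncation error: if `‖f''''‖ ≤ M` on `[t − 3τ, t]`, then
`‖((11/6)f(t) − 3f(t − τ) + (3/2)f(t − 2τ) − (1/3)f(t − 3τ))/τ − f'(t)‖ ≤ (9/4) M τ³`. -/
theorem stmt15 {E : Type*} [NormedAddCommGroup E] [NormedSpace ℝ E]
    (f f' f'' f''' f'''' : ℝ → E) (t τ M : ℝ) (hτ : 0 < τ) (hM : 0 ≤ M)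
    (hf : ∀ s ∈ Set.Icc (t - 3 * τ) t, HasDerivWithinAt f (f' s) (Set.Icc (t - 3 * τ) t) s)
    (hf' : ∀ s ∈ Set.Icc (t - 3 * τ) t, HasDerivWithinAt f' (f'' s) (Set.Icc (t - 3 * τ) t) s)
    (hf'' : ∀ s ∈ Set.Icc (t - 3 * τ) t, HasDerivWithinAt f'' (f''' s) (Set.Icc (t - 3 * τ) t) s)
    (hf''' : ∀ s ∈ Set.Icc (t - 3 * τ) t,
      HasDerivWithinAt f''' (f'''' s) (Set.Icc (t - 3 * τ) t) s)
    (hbound : ∀ s ∈ Set.Icc (t - 3 * τ) t, ‖f'''' s‖ ≤ M) :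
    ‖τ⁻¹ • ((11 / 6 : ℝ) • f t - (3 : ℝ) • f (t - τ) + (3 / 2 : ℝ) • f (t - 2 * τ)
        - (1 / 3 : ℝ) • f (t - 3 * τ)) - f' t‖ ≤ 9 / 4 * M * τ ^ 3 := by
  have hτ0 : τ ≠ 0 := ne_of_gt hτ
  have hm1 : t - τ ∈ Set.Icc (t - 3 * τ) t := by constructor <;> linarith
  have hm2 : t - 2 * τ ∈ Set.Icc (t - 3 * τ) t := by constructor <;> linarith
  have hm3 : t - 3 * τ ∈ Set.Icc (t - 3 * τ) t := by constructor <;> linarith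
  have T := taylor3_right f f' f'' f''' f'''' (t - 3 * τ) t M hf hf' hf'' hf''' hbound
  have h1 := T (t - τ) hm1
  have h2 := T (t - 2 * τ) hm2
  have h3 := T (t - 3 * τ) hm3
  set E1 : E := f (t - τ) - f t - ((t - τ) - t) • f' t - (((t - τ) - t) ^ 2 / 2) • f'' t
      - (((t - τ) - t) ^ 3 / 6) • f''' t with hE1
  set E2 : E := f (t - 2 * τ) - f t - ((t - 2 * τ) - t) • f' t
      - (((t - 2 * τ) - t) ^ 2 / 2) • f'' t - (((t - 2 * τ) - t) ^ 3 / 6) • f''' t with hE2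
  set E3 : E := f (t - 3 * τ) - f t - ((t - 3 * τ) - t) • f' t
      - (((t - 3 * τ) - t) ^ 2 / 2) • f'' t - (((t - 3 * τ) - t) ^ 3 / 6) • f''' t with hE3
  have key : τ⁻¹ • ((11 / 6 : ℝ) • f t - (3 : ℝ) • f (t - τ) + (3 / 2 : ℝ) • f (t - 2 * τ)
        - (1 / 3 : ℝ) • f (t - 3 * τ)) - f' t
      = τ⁻¹ • ((-3 : ℝ) • E1 + (3 / 2 : ℝ) • E2 - (1 / 3 : ℝ) • E3) := by
    rw [hE1, hE2, hE3]
    match_scalars <;> field_simp <;> ring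
  rw [key]
  have hb1 : ‖E1‖ ≤ M * τ ^ 4 / 24 := by
    have : t - (t - τ) = τ := by ring
    rw [this] at h1; exact h1
  have hb2 : ‖E2‖ ≤ M * (2 * τ) ^ 4 / 24 := by
    have : t - (t - 2 * τ) = 2 * τ := by ring
    rw [this] at h2; exact h2
  have hb3 : ‖E3‖ ≤ M * (3 * τ) ^ 4 / 24 := by
    have : t - (t - 3 * τ) = 3 * τ := by ring
    rw [this] at h3; exact h3
  have htri : ‖(-3 : ℝ) • E1 + (3 / 2 : ℝ) • E2 - (1 / 3 : ℝ) • E3‖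
      ≤ 3 * ‖E1‖ + (3 / 2) * ‖E2‖ + (1 / 3) * ‖E3‖ := by
    calc ‖(-3 : ℝ) • E1 + (3 / 2 : ℝ) • E2 - (1 / 3 : ℝ) • E3‖
        ≤ ‖(-3 : ℝ) • E1 + (3 / 2 : ℝ) • E2‖ + ‖(1 / 3 : ℝ) • E3‖ := norm_sub_le _ _
      _ ≤ ‖(-3 : ℝ) • E1‖ + ‖(3 / 2 : ℝ) • E2‖ + ‖(1 / 3 : ℝ) • E3‖ := by
          gcongr; exact norm_add_le _ _
      _ = 3 * ‖E1‖ + (3 / 2) * ‖E2‖ + (1 / 3) * ‖E3‖ := by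
          simp [norm_smul]
  rw [norm_smul, Real.norm_eq_abs, abs_of_pos (inv_pos.mpr hτ)]
  calc τ⁻¹ * ‖(-3 : ℝ) • E1 + (3 / 2 : ℝ) • E2 - (1 / 3 : ℝ) • E3‖
      ≤ τ⁻¹ * (3 * (M * τ ^ 4 / 24) + (3 / 2) * (M * (2 * τ) ^ 4 / 24)
          + (1 / 3) * (M * (3 * τ) ^ 4 / 24)) := by
        gcongr
        calc ‖(-3 : ℝ) • E1 + (3 / 2 : ℝ) • E2 - (1 / 3 : ℝ) • E3‖
            ≤ 3 * ‖E1‖ + (3 / 2) * ‖E2‖ + (1 / 3) * ‖E3‖ := htri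
          _ ≤ _ := by gcongr
    _ = 9 / 4 * M * τ ^ 3 := by field_simp; ring
end
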